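/- Let n ≥ 3 be an integer and c < 0. The function φ₂(t) = tanh(t)·∫_c^t cosh(τ)^n/sinh(τ)² dτ satisfies the linear ODE φ'' - (n-2)·tanh(t)·φ' + n·sech²(t)·φ = 0 on the interval (-∞, 0). -/

import Mathlib

open Real intervalIntegral

theorem stmt_15 (n : ℕ) (hn : 3 ≤ n) (c : ℝ) (hc : c < 0)
    (φ : ℝ → ℝ)
    (hφ : ∀ t, φ t = Real.tanh t * ∫ τ in c..t, Real.cosh τ ^ n / Real.sinh τ ^ 2) :
    ∀ t : ℝ, t < 0 →
      deriv (deriv φ) t - ((n:ℝ) - 2) * Real.tanh t * deriv φ t +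
        (n:ℝ) * (1 / Real.cosh t) ^ 2 * φ t = 0 := by
  obtain ⟨m, rfl⟩ := Nat.exists_eq_add_of_le hn
  intro t ht
  set g : ℝ → ℝ := fun τ => Real.cosh τ ^ (3 + m) / Real.sinh τ ^ 2 with hgdef
  set F : ℝ → ℝ := fun u => ∫ τ in c..u, g τ with hFdef
  -- continuity of g on Iio 0
  have hsinh_ne : ∀ x : ℝ, x < 0 → Real.sinh x ≠ 0 := fun x hx =>
    ne_of_lt (by simpa using Real.sinh_neg_iff.mpr hx)
  have hgcont : ContinuousOn g (Set.Iio 0) := by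
    apply ContinuousOn.div
    · exact (Real.continuous_cosh.pow _).continuousOn
    · exact (Real.continuous_sinh.pow _).continuousOn
    · intro x hx
      exact pow_ne_zero _ (hsinh_ne x hx)
  -- F has derivative g x at each x < 0
  have hF : ∀ x : ℝ, x < 0 → HasDerivAt F (g x) x := by
    intro x hx
    apply intervalIntegral.integral_hasDerivAt_right
    · apply ContinuousOn.intervalIntegrable
      apply hgcont.mono
      intro y hy
      simp only [Set.mem_Iio]
      rcases Set.mem_uIcc.mp hy with h | h
      · exact lt_of_le_of_lt h.2 hx
      · exact lt_of_le_of_lt h.2 hc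
    · exact ContinuousOn.stronglyMeasurableAtFilter isOpen_Iio hgcont x hx
    · exact hgcont.continuousAt (isOpen_Iio.mem_nhds hx)
  have hcosh_ne : ∀ x : ℝ, Real.cosh x ≠ 0 := fun x => (Real.cosh_pos x).ne'
  -- tanh derivative
  have htanh : ∀ x : ℝ, HasDerivAt Real.tanh (1 / Real.cosh x ^ 2) x := by
    intro x
    have h : HasDerivAt (fun y => Real.sinh y / Real.cosh y)
        ((Real.cosh x * Real.cosh x - Real.sinh x * Real.sinh x) / Real.cosh x ^ 2) x :=
      (Real.hasDerivAt_sinh x).div (Real.hasDerivAt_cosh x) (hcosh_ne x)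
    have he : (Real.cosh x * Real.cosh x - Real.sinh x * Real.sinh x) / Real.cosh x ^ 2
        = 1 / Real.cosh x ^ 2 := by
      rw [show Real.cosh x * Real.cosh x - Real.sinh x * Real.sinh x
          = Real.cosh x ^ 2 - Real.sinh x ^ 2 by ring, Real.cosh_sq_sub_sinh_sq]
    rw [he] at h
    exact h.congr_of_eventuallyEq
      (Filter.Eventually.of_forall fun y => Real.tanh_eq_sinh_div_cosh y)
  -- first derivative of φ
  set ψ : ℝ → ℝ := fun x => 1 / Real.cosh x ^ 2 * F x + Real.tanh x * g x with hψdef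
  have hφ' : ∀ x : ℝ, x < 0 → HasDerivAt φ (ψ x) x := by
    intro x hx
    have h := (htanh x).mul (hF x hx)
    refine (h.congr_of_eventuallyEq ?_)
    filter_upwards with y using (hφ y)
  -- derivative of g at x < 0
  have hg' : ∀ x : ℝ, x < 0 → HasDerivAt g
      ((((3:ℝ) + m) * Real.cosh x ^ (2 + m) * Real.sinh x * Real.sinh x ^ 2
        - Real.cosh x ^ (3 + m) * (2 * Real.sinh x * Real.cosh x)) / (Real.sinh x ^ 2) ^ 2) x := by
    intro x hx
    have hnum : HasDerivAt (fun y => Real.cosh y ^ (3 + m))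
        (((3:ℝ) + m) * Real.cosh x ^ (2 + m) * Real.sinh x) x := by
      have h : HasDerivAt (fun y => Real.cosh y ^ (3 + m)) (((3 + m : ℕ) : ℝ) * Real.cosh x ^ (3 + m - 1) * Real.sinh x) x :=
        (Real.hasDerivAt_cosh x).pow (3 + m)
      have h31 : 3 + m - 1 = 2 + m := by omega
      rw [h31] at h
      convert h using 1
      push_cast
      ring
    have hden : HasDerivAt (fun y => Real.sinh y ^ 2) (2 * Real.sinh x * Real.cosh x) x := by
      have : HasDerivAt (fun y => Real.sinh y ^ 2) (((2 : ℕ) : ℝ) * Real.sinh x ^ (2 - 1) * Real.cosh x) x :=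
        (Real.hasDerivAt_sinh x).pow 2
      convert this using 1
      push_cast
      ring
    exact hnum.div hden (pow_ne_zero _ (hsinh_ne x hx))
  -- derivative of 1/cosh^2
  have hsech : ∀ x : ℝ, HasDerivAt (fun y => 1 / Real.cosh y ^ 2)
      ((0 * Real.cosh x ^ 2 - 1 * (2 * Real.cosh x * Real.sinh x)) / (Real.cosh x ^ 2) ^ 2) x := by
    intro x
    have hden : HasDerivAt (fun y => Real.cosh y ^ 2) (2 * Real.cosh x * Real.sinh x) x := by
      have : HasDerivAt (fun y => Real.cosh y ^ 2) (((2 : ℕ) : ℝ) * Real.cosh x ^ (2 - 1) * Real.sinh x) x :=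
        (Real.hasDerivAt_cosh x).pow 2
      convert this using 1
      push_cast
      ring
    exact (hasDerivAt_const x (1:ℝ)).div hden (pow_ne_zero _ (hcosh_ne x))
  -- derivative of ψ at t
  have hψ' : HasDerivAt ψ
      (((0 * Real.cosh t ^ 2 - 1 * (2 * Real.cosh t * Real.sinh t)) / (Real.cosh t ^ 2) ^ 2) * F t
        + 1 / Real.cosh t ^ 2 * g t
        + (1 / Real.cosh t ^ 2 * g t + Real.tanh t *
          ((((3:ℝ) + m) * Real.cosh t ^ (2 + m) * Real.sinh t * Real.sinh t ^ 2
            - Real.cosh t ^ (3 + m) * (2 * Real.sinh t * Real.cosh t)) / (Real.sinh t ^ 2) ^ 2))) t :=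
    ((hsech t).mul (hF t ht)).add ((htanh t).mul (hg' t ht))
  -- deriv φ agrees with ψ near t
  have hEq : deriv φ =ᶠ[nhds t] ψ := by
    filter_upwards [isOpen_Iio.mem_nhds ht] with x hx
    exact (hφ' x hx).deriv
  have hd2 : deriv (deriv φ) t = deriv ψ t := hEq.deriv_eq
  rw [hd2, hψ'.deriv, (hφ' t ht).deriv, hφ t]
  have hC := hcosh_ne t
  have hS := hsinh_ne t ht
  have hid : Real.cosh t ^ 2 - Real.sinh t ^ 2 = 1 := Real.cosh_sq_sub_sinh_sq t
  have hψt : ψ t = 1 / Real.cosh t ^ 2 * F t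
      + Real.tanh t * (Real.cosh t ^ (3 + m) / Real.sinh t ^ 2) := rfl
  have hFt : (∫ τ in c..t, g τ) = F t := rfl
  rw [hψt, hFt]
  generalize F t = Fv
  rw [Real.tanh_eq_sinh_div_cosh]
  set S := Real.sinh t
  set C := Real.cosh t
  have hCm : C ^ (3 + m) = C ^ m * C ^ 3 := by rw [pow_add]; ring
  have hCm2 : C ^ (2 + m) = C ^ m * C ^ 2 := by rw [pow_add]; ring
  rw [hCm, hCm2]
  push_cast
  field_simp
  have hinv : S ^ 2 * S⁻¹ ^ 2 = 1 := by field_simp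
  linear_combination (-2 * C ^ 4 * C ^ m) * hid
    + (2 * C ^ 4 * C ^ m) * hinv
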